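/- In the Gale–Shapley setting generalized to algorithm α: if all men initially propose to their top choices (I = (1,1,...,1)), then a man i is forbidden in a reachable proposal vector G if and only if i is unmatched in G (his proposal is not the best proposal that his proposed woman has received in any vector ≤ G); i.e., the forbidden condition reduces to the standard GS rejection condition. -/

import Mathlib

open Finset

/-- A stable marriage instance: `m` men, `w` women, complete strict preference lists.
`mpref i k` is the woman at rank `k` (rank `0` = most preferred) on man `i`'s list.
`wrank q p` is the rank of man `p` on woman `q`'s list (smaller = more preferred). -/
structure SM (m w : ℕ) where
  mpref : Fin m → (Fin w ≃ Fin w)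
  wrank : Fin w → Fin m → ℕ
  wrank_inj : ∀ q : Fin w, Function.Injective (wrank q)

namespace SM

variable {m w : ℕ} (S : SM m w)

/-- The woman that man `i` proposes to in proposal vector `G`. -/
def rho (G : Fin m → Fin w) (i : Fin m) : Fin w := S.mpref i (G i)

/-- `(p, q)` is a blocking pair for proposal vector `G`: `p` strictly prefers `q` to the
woman he proposes to in `G`, and `q` strictly prefers `p` to every man proposing to
her in `G` (vacuously true if she receives no proposal in `G`). -/
def Blocking (G : Fin m → Fin w) (p : Fin m) (q : Fin w) : Prop :=
  (S.mpref p).symm q < G p ∧ ∀ j : Fin m, S.rho G j = q → S.wrank q p < S.wrank q j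

/-- `G` is a man-saturating matching: all men propose to distinct women. -/
def Saturating (G : Fin m → Fin w) : Prop := Function.Injective (S.rho G)

/-- `G` is a stable marriage: a man-saturating matching with no blocking pair. -/
def Stable (G : Fin m → Fin w) : Prop :=
  S.Saturating G ∧ ∀ p q, ¬ S.Blocking G p q

/-- `numw G`: the number of distinct women who receive a proposal in some proposal
vector less than or equal to `G` (i.e. women whose rank on some man `i`'s list
is at most `G i`). -/
def numw (G : Fin m → Fin w) : ℕ :=
  (Finset.univ.filter fun q : Fin w => ∃ i : Fin m, (S.mpref i).symm q ≤ G i).card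

/-- Man `i` is forbidden in `G`: there is another man `j` such that either both propose
to the same woman in `G` and she prefers `j`, or `(j, ρ(G,i))` is a blocking pair in `G`. -/
def Forbidden (G : Fin m → Fin w) (i : Fin m) : Prop :=
  ∃ j : Fin m, j ≠ i ∧
    ((S.rho G j = S.rho G i ∧ S.wrank (S.rho G i) j < S.wrank (S.rho G i) i) ∨
      S.Blocking G j (S.rho G i))

/-- Man `i` is rForbidden in `G`: there is a woman `q` whom `i` strictly prefers to his
current proposal and who strictly prefers `i` to every other man who has proposed to her
in any proposal vector `≤ G`. -/
def RForbidden (G : Fin m → Fin w) (i : Fin m) : Prop :=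
  ∃ q : Fin w, (S.mpref i).symm q < G i ∧
    ∀ j : Fin m, j ≠ i → (S.mpref j).symm q ≤ G j → S.wrank q i < S.wrank q j

end SM

/-- The `L¹` (Manhattan) distance between two proposal vectors. -/
def pdist {m w : ℕ} (G H : Fin m → Fin w) : ℕ :=
  ∑ i, Nat.dist (G i : ℕ) (H i : ℕ)

/-- Proposal vectors reachable from the bottom vector (all men at their top choice) by
repeatedly advancing a forbidden man to his next choice. -/
inductive Reachable {m w : ℕ} (S : SM m w) (hw : 0 < w) : (Fin m → Fin w) → Prop
  | base : Reachable S hw (fun _ => ⟨0, hw⟩)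
  | step {G : Fin m → Fin w} {i : Fin m} (hG : Reachable S hw G)
      (hf : S.Forbidden G i) (hlt : (G i : ℕ) + 1 < w) :
      Reachable S hw (Function.update G i ⟨(G i : ℕ) + 1, hlt⟩)

/-- `i`'s proposal is the best proposal his proposed woman has received in any vector
`≤ G` (i.e. `curBest[ρ(G,i)] = i`). -/
def CurBest {m w : ℕ} (S : SM m w) (G : Fin m → Fin w) (i : Fin m) : Prop :=
  ∀ j : Fin m, j ≠ i → (S.mpref j).symm (S.rho G i) ≤ G j →
    S.wrank (S.rho G i) i < S.wrank (S.rho G i) j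

/-- For vectors reachable from the all-top-choices vector, the forbidden condition
reduces to the standard Gale–Shapley rejection condition: man `i` is forbidden in `G`
iff his proposal is not the best one his woman has received in any vector `≤ G`. -/
theorem stmt16 {m w : ℕ} (S : SM m w) (hw : 0 < w) (G : Fin m → Fin w)
    (hR : Reachable S hw G) :
    ∀ i : Fin m, S.Forbidden G i ↔ ¬ CurBest S G i := by
  intro i
  set q := S.rho G i with hq
  constructor
  · rintro ⟨j, hne, h⟩ hcb
    rcases h with ⟨hρ, hlt⟩ | ⟨h1, h2⟩
    · have hj : (S.mpref j).symm q = G j := by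
        rw [hq, ← hρ]; simp [SM.rho]
      exact absurd (hcb j hne hj.le) (not_lt.mpr hlt.le)
    · have := h2 i rfl
      exact absurd (hcb j hne h1.le) (not_lt.mpr this.le)
  · intro hcb
    unfold CurBest at hcb
    push_neg at hcb
    obtain ⟨j, hne, hle, hnlt⟩ := hcb
    have hjlt : S.wrank q j < S.wrank q i := by
      rcases lt_or_eq_of_le hnlt with h | h
      · exact h
      · exact absurd (S.wrank_inj q h) hne
    set T : Finset (Fin m) :=
      Finset.univ.filter (fun k => (S.mpref k).symm q ≤ G k) with hT
    have hjT : j ∈ T := by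
      simp only [hT, Finset.mem_filter, Finset.mem_univ, true_and]; exact hle
    obtain ⟨j', hj'T, hmin⟩ :=
      Finset.exists_min_image T (fun k => S.wrank q k) ⟨j, hjT⟩
    have hj'le : (S.mpref j').symm q ≤ G j' := by
      simpa [hT] using hj'T
    have hj'i : S.wrank q j' < S.wrank q i :=
      lt_of_le_of_lt (hmin j hjT) hjlt
    have hj'ne : j' ≠ i := fun h => by simp [h] at hj'i
    rcases lt_or_eq_of_le hj'le with hlt | heq
    · -- j' strictly prefers q: blocking pair
      refine ⟨j', hj'ne, Or.inr ⟨hlt, fun k hk => ?_⟩⟩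
      have hkT : k ∈ T := by
        simp only [hT, Finset.mem_filter, Finset.mem_univ, true_and]
        have : (S.mpref k).symm q = G k := by
          rw [hq, ← hk]; simp [SM.rho]
        exact this.le
      have hkne : k ≠ j' := by
        rintro rfl
        have : (S.mpref k).symm q = G k := by
          rw [hq, ← hk]; simp [SM.rho]
        exact absurd this (ne_of_lt hlt)
      rcases lt_or_eq_of_le (hmin k hkT) with h | h
      · exact h
      · exact absurd (S.wrank_inj q h) (Ne.symm hkne)
    · -- j' currently proposes to q
      refine ⟨j', hj'ne, Or.inl ⟨?_, hj'i⟩⟩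
      rw [hq.symm, SM.rho, ← heq]; simp
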